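/- Let w ∈ S_n have full support, and suppose s and t are both commuting descents of w. Then s and t commute with each other. -/

import Mathlib

/-- The support of `w`: the set of simple reflection indices appearing in some
(equivalently, any) reduced word for `w`. -/
def CoxeterSystem.supp {B W : Type*} [Group W] {M : CoxeterMatrix B}
    (cs : CoxeterSystem M W) (w : W) : Set B :=
  { i | ∃ ω : List B, cs.IsReduced ω ∧ cs.wordProd ω = w ∧ i ∈ ω }

def invaSet {n : ℕ} (w : Equiv.Perm (Fin n)) : Finset (Fin n × Fin n) :=
  Finset.univ.filter fun p => p.1 < p.2 ∧ w p.2 < w p.1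

def inva {n : ℕ} (w : Equiv.Perm (Fin n)) : ℕ := (invaSet w).card

lemma mem_invaSet {n : ℕ} {w : Equiv.Perm (Fin n)} {p : Fin n × Fin n} :
    p ∈ invaSet w ↔ p.1 < p.2 ∧ w p.2 < w p.1 := by simp [invaSet]

lemma swap_lt_swap {m : ℕ} (i : Fin m) {x y : Fin (m+1)} (hxy : x < y)
    (h : ¬(x = i.castSucc ∧ y = i.succ)) :
    Equiv.swap i.castSucc i.succ x < Equiv.swap i.castSucc i.succ y := by
  simp only [Equiv.swap_apply_def]
  split_ifs <;>
    (simp only [Fin.ext_iff, Fin.lt_def, Fin.coe_castSucc, Fin.val_succ, not_and] at *; omega)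

lemma invaSet_erase_eq {m : ℕ} (w : Equiv.Perm (Fin (m+1))) (i : Fin m) :
    (invaSet (w * Equiv.swap i.castSucc i.succ)).erase (i.castSucc, i.succ)
      = ((invaSet w).erase (i.castSucc, i.succ)).image
          (fun p => (Equiv.swap i.castSucc i.succ p.1, Equiv.swap i.castSucc i.succ p.2)) := by
  set a := i.castSucc
  set b := i.succ
  have hab : a < b := Fin.castSucc_lt_succ (i := i)
  ext p
  simp only [Finset.mem_erase, Finset.mem_image, mem_invaSet, Equiv.Perm.mul_apply]
  constructor
  · rintro ⟨hne, hlt, hw⟩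
    refine ⟨(Equiv.swap a b p.1, Equiv.swap a b p.2), ⟨?_, ?_, ?_⟩, ?_⟩
    · intro hc
      have h1 : Equiv.swap a b p.1 = a := congrArg Prod.fst hc
      have h2 : Equiv.swap a b p.2 = b := congrArg Prod.snd hc
      have : p.1 = b := by
        have := congrArg (Equiv.swap a b) h1
        simpa [Equiv.swap_apply_right] using this
      have : p.2 = a := by
        have := congrArg (Equiv.swap a b) h2
        simpa [Equiv.swap_apply_left] using this
      have : p.2 < p.1 := by
        rw [this, ‹p.1 = b›]; exact hab
      exact absurd hlt (asymm this)
    · exact swap_lt_swap i hlt (by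
        intro hc
        exact hne (Prod.ext hc.1 hc.2))
    · simpa using hw
    · simp [Prod.ext_iff]
  · rintro ⟨q, ⟨hne, hlt, hw⟩, rfl⟩
    refine ⟨?_, swap_lt_swap i hlt (fun hc => hne (Prod.ext hc.1 hc.2)), by simpa using hw⟩
    intro hc
    have h1 : Equiv.swap a b q.1 = a := congrArg Prod.fst hc
    have h2 : Equiv.swap a b q.2 = b := congrArg Prod.snd hc
    have e1 : q.1 = b := by
      have := congrArg (Equiv.swap a b) h1
      simpa [Equiv.swap_apply_right] using this
    have e2 : q.2 = a := by
      have := congrArg (Equiv.swap a b) h2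
      simpa [Equiv.swap_apply_left] using this
    rw [e1, e2] at hlt
    exact absurd hlt (asymm hab)

lemma swap_pair_injective {n : ℕ} (a b : Fin n) :
    Function.Injective (fun p : Fin n × Fin n => (Equiv.swap a b p.1, Equiv.swap a b p.2)) := by
  intro p q h
  have h1 := congrArg Prod.fst h
  have h2 := congrArg Prod.snd h
  exact Prod.ext ((Equiv.swap a b).injective h1) ((Equiv.swap a b).injective h2)

lemma inva_mul_swap_of_lt {m : ℕ} {w : Equiv.Perm (Fin (m+1))} {i : Fin m}
    (h : w i.castSucc < w i.succ) :
    inva (w * Equiv.swap i.castSucc i.succ) = inva w + 1 := by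
  set a := i.castSucc
  set b := i.succ
  have hab : a < b := Fin.castSucc_lt_succ (i := i)
  have hmemT : (a, b) ∈ invaSet (w * Equiv.swap a b) := by
    rw [mem_invaSet]
    simpa [Equiv.Perm.mul_apply, Equiv.swap_apply_left, Equiv.swap_apply_right] using ⟨hab, h⟩
  have hmemS : (a, b) ∉ invaSet w := by
    rw [mem_invaSet]
    rintro ⟨-, h2⟩
    exact absurd h (asymm h2)
  have hcard : ((invaSet (w * Equiv.swap a b)).erase (a, b)).card
      = ((invaSet w).erase (a, b)).card := by
    rw [invaSet_erase_eq w i, Finset.card_image_of_injective _ (swap_pair_injective a b)]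
  have h1 := Finset.card_erase_add_one hmemT
  rw [Finset.erase_eq_of_notMem hmemS] at hcard
  unfold inva
  omega

lemma inva_mul_swap_of_gt {m : ℕ} {w : Equiv.Perm (Fin (m+1))} {i : Fin m}
    (h : w i.succ < w i.castSucc) :
    inva w = inva (w * Equiv.swap i.castSucc i.succ) + 1 := by
  set a := i.castSucc
  set b := i.succ
  have hab : a < b := Fin.castSucc_lt_succ (i := i)
  have hmemS : (a, b) ∈ invaSet w := mem_invaSet.mpr ⟨hab, h⟩
  have hmemT : (a, b) ∉ invaSet (w * Equiv.swap a b) := by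
    rw [mem_invaSet]
    rintro ⟨-, h2⟩
    simp only [Equiv.Perm.mul_apply, Equiv.swap_apply_left, Equiv.swap_apply_right] at h2
    exact absurd h (asymm h2)
  have hcard : ((invaSet (w * Equiv.swap a b)).erase (a, b)).card
      = ((invaSet w).erase (a, b)).card := by
    rw [invaSet_erase_eq w i, Finset.card_image_of_injective _ (swap_pair_injective a b)]
  have h1 := Finset.card_erase_add_one hmemS
  rw [Finset.erase_eq_of_notMem hmemT] at hcard
  unfold inva
  omega

lemma inva_one {n : ℕ} : inva (1 : Equiv.Perm (Fin n)) = 0 := by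
  unfold inva invaSet
  rw [Finset.card_eq_zero, Finset.filter_eq_empty_iff]
  rintro p - ⟨h1, h2⟩
  simp only [Equiv.Perm.one_apply] at h2
  exact absurd (h1.trans h2) (lt_irrefl _)

lemma strictMono_le_apply {n : ℕ} {w : Equiv.Perm (Fin (n+1))} (h : StrictMono (⇑w)) :
    ∀ x : Fin (n+1), (x : ℕ) ≤ (w x : ℕ) := by
  intro x
  induction x using Fin.induction with
  | zero => exact Nat.zero_le _
  | succ i ih =>
    have h2 := h (Fin.castSucc_lt_succ (i := i))
    rw [Fin.lt_def] at h2
    simp only [Fin.coe_castSucc] at ih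
    simp only [Fin.val_succ]
    omega

lemma strictMono_perm_eq_one {n : ℕ} {w : Equiv.Perm (Fin (n+1))} (h : StrictMono (⇑w)) :
    w = 1 := by
  have hsymm : StrictMono (⇑w⁻¹) := by
    intro x y hxy
    rcases lt_trichotomy (w⁻¹ x) (w⁻¹ y) with hl | he | hg
    · exact hl
    · exact absurd (w⁻¹.injective he) hxy.ne
    · have := h hg
      simp only [Equiv.Perm.inv_def, Equiv.apply_symm_apply] at this
      exact absurd hxy (asymm this)
  ext x
  have h1 := strictMono_le_apply h x
  have h2 := strictMono_le_apply hsymm (w x)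
  rw [Equiv.Perm.inv_def, Equiv.symm_apply_apply] at h2
  simp only [Equiv.Perm.one_apply]
  omega

lemma exists_adj_descent {n : ℕ} {w : Equiv.Perm (Fin (n+1))} (hw : w ≠ 1) :
    ∃ i : Fin n, w i.succ < w i.castSucc := by
  by_contra hc
  push_neg at hc
  apply hw
  apply strictMono_perm_eq_one
  rw [Fin.strictMono_iff_lt_succ]
  intro i
  exact lt_of_le_of_ne (hc i) (w.injective.ne (Fin.castSucc_lt_succ (i := i)).ne)

lemma length_eq_inva {m : ℕ}
    (cs : CoxeterSystem (CoxeterMatrix.Aₙ m) (Equiv.Perm (Fin (m + 1))))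
    (hs : ∀ i : Fin m, cs.simple i = Equiv.swap i.castSucc i.succ)
    (w : Equiv.Perm (Fin (m + 1))) : cs.length w = inva w := by
  have hle : ∀ w : Equiv.Perm (Fin (m+1)), cs.length w ≤ inva w := by
    have key : ∀ k, ∀ u : Equiv.Perm (Fin (m+1)), inva u = k → cs.length u ≤ k := by
      intro k
      induction k using Nat.strong_induction_on with
      | _ k ih =>
        intro u hk
        rcases eq_or_ne u 1 with rfl | hu
        · simp
        · obtain ⟨i, hi⟩ := exists_adj_descent hu
          have h2 := inva_mul_swap_of_gt hi
          set u' := u * Equiv.swap i.castSucc i.succ with hu'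
          have hinv : inva u' + 1 = k := by omega
          have hlu' : cs.length u' ≤ inva u' := ih (inva u') (by omega) u' rfl
          have hue : u = u' * cs.simple i := by
            rw [hs i, hu', mul_assoc, Equiv.swap_mul_self, mul_one]
          calc cs.length u = cs.length (u' * cs.simple i) := by rw [← hue]
            _ ≤ cs.length u' + cs.length (cs.simple i) := cs.length_mul_le u' (cs.simple i)
            _ ≤ inva u' + 1 := by rw [cs.length_simple]; omega
            _ = k := hinv
    exact fun w => key (inva w) w rfl
  have hge : inva w ≤ cs.length w := by
    obtain ⟨ω, hlen, hw⟩ := cs.exists_reduced_word w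
    have : ∀ ω : List (Fin m), inva (cs.wordProd ω) ≤ ω.length := by
      intro ω
      induction ω using List.reverseRecOn with
      | nil => simp [inva_one]
      | append_singleton ω i ihω =>
        rw [← List.concat_eq_append, cs.wordProd_concat, hs i]
        rcases lt_trichotomy (cs.wordProd ω i.castSucc) (cs.wordProd ω i.succ) with hlt | heq | hgt
        · rw [inva_mul_swap_of_lt hlt]
          simp only [List.length_concat]
          omega
        · exact absurd ((cs.wordProd ω).injective heq)
            (Fin.castSucc_lt_succ (i := i)).ne
        · have := inva_mul_swap_of_gt hgt
          simp only [List.length_concat]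
          omega
    have h3 := this ω
    rw [← hw] at h3
    have h5 : cs.length w = ω.length := by rw [hw]; exact hlen
    omega
  have h4 := hle w
  omega

lemma descent_fixes {m : ℕ}
    (cs : CoxeterSystem (CoxeterMatrix.Aₙ m) (Equiv.Perm (Fin (m + 1))))
    (hs : ∀ i : Fin m, cs.simple i = Equiv.swap i.castSucc i.succ)
    (w : Equiv.Perm (Fin (m + 1))) (i : Fin m)
    (hi : cs.IsLeftDescent w i) (hic : cs.simple i * w = w * cs.simple i) :
    w i.castSucc = i.succ ∧ w i.succ = i.castSucc := by
  set a := i.castSucc with ha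
  set b := i.succ with hb
  have hab : a < b := Fin.castSucc_lt_succ (i := i)
  have hlen : cs.length (w * cs.simple i) < cs.length w := by
    rw [← hic]; exact hi
  rw [hs i, length_eq_inva cs hs, length_eq_inva cs hs] at hlen
  have hgt : w b < w a := by
    rcases lt_trichotomy (w a) (w b) with hl | he | hg
    · rw [inva_mul_swap_of_lt hl] at hlen; omega
    · exact absurd (w.injective he) hab.ne
    · exact hg
  have h1 : Equiv.swap a b (w a) = w b := by
    have := congrArg (fun u : Equiv.Perm (Fin (m+1)) => u a) hic
    simpa [hs i, Equiv.Perm.mul_apply, Equiv.swap_apply_left, a, b] using this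
  have h2 : Equiv.swap a b (w b) = w a := by
    have := congrArg (fun u : Equiv.Perm (Fin (m+1)) => u b) hic
    simpa [hs i, Equiv.Perm.mul_apply, Equiv.swap_apply_right, a, b] using this
  have hwa : w a = b := by
    rcases eq_or_ne (w a) a with h | h
    · rw [h, Equiv.swap_apply_left] at h1
      rw [h, ← h1] at hgt
      exact absurd hgt (asymm hab)
    · rcases eq_or_ne (w a) b with h' | h'
      · exact h'
      · rw [Equiv.swap_apply_of_ne_of_ne h h'] at h1
        exact absurd (w.injective h1) hab.ne
  have hwb : w b = a := by
    have h3 := congrArg (Equiv.swap a b) h2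
    rw [Equiv.swap_apply_self, hwa, Equiv.swap_apply_right] at h3
    exact h3
  exact ⟨hwa, hwb⟩


/-- If `w ∈ S_n` has full support and `s, t` are both commuting descents of `w`
(descents commuting with `w`), then `s` and `t` commute with each other. -/
theorem stmt_6 {m : ℕ}
    (cs : CoxeterSystem (CoxeterMatrix.Aₙ m) (Equiv.Perm (Fin (m + 1))))
    (hs : ∀ i : Fin m, cs.simple i = Equiv.swap i.castSucc i.succ)
    (w : Equiv.Perm (Fin (m + 1)))
    (hfull : cs.supp w = Set.univ)
    (i j : Fin m)
    (hi : cs.IsLeftDescent w i) (hic : cs.simple i * w = w * cs.simple i)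
    (hj : cs.IsLeftDescent w j) (hjc : cs.simple j * w = w * cs.simple j) :
    Commute (cs.simple i) (cs.simple j) := by
  rcases eq_or_ne i j with rfl | hij
  · exact Commute.refl _
  obtain ⟨hia, hib⟩ := descent_fixes cs hs w i hi hic
  obtain ⟨hja, hjb⟩ := descent_fixes cs hs w j hj hjc
  have hij' : (i : ℕ) ≠ (j : ℕ) := fun h => hij (Fin.ext h)
  have h1 : i.succ ≠ j.castSucc := by
    intro h
    have h2 : w i.succ = w j.castSucc := by rw [h]
    rw [hib, hja] at h2
    have e1 : (i : ℕ) + 1 = (j : ℕ) := by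
      simpa [Fin.ext_iff] using h
    have e2 : (i : ℕ) = (j : ℕ) + 1 := by
      simpa [Fin.ext_iff] using h2
    omega
  have h2 : j.succ ≠ i.castSucc := by
    intro h
    have h2 : w j.succ = w i.castSucc := by rw [h]
    rw [hjb, hia] at h2
    have e1 : (j : ℕ) + 1 = (i : ℕ) := by
      simpa [Fin.ext_iff] using h
    have e2 : (j : ℕ) = (i : ℕ) + 1 := by
      simpa [Fin.ext_iff] using h2
    omega
  rw [hs i, hs j]
  apply Equiv.Perm.Disjoint.commute
  intro x
  by_cases hx : x = j.castSucc ∨ x = j.succ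
  · left
    apply Equiv.swap_apply_of_ne_of_ne
    · rcases hx with rfl | rfl
      · intro h; exact hij' ((by simpa [Fin.ext_iff] using h : (j:ℕ) = (i:ℕ))).symm
      · exact h2
    · rcases hx with rfl | rfl
      · exact fun h => h1 h.symm
      · intro h; exact hij' ((by simpa [Fin.ext_iff] using h : (j:ℕ) = (i:ℕ))).symm
  · right
    push_neg at hx
    exact Equiv.swap_apply_of_ne_of_ne hx.1 hx.2
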